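/- Let α ∈ (0,1) ∪ (1,∞), and let F : ℝ → ℝ be any function satisfying F(H(v_2(p))) = ‖v_2(p)‖_α for every p ∈ [0, 1/2]. Then F is strictly concave on the interval [0, ln 2]. -/

import Mathlib

open Real Set

/-- Shannon entropy (natural log, with `0 * log 0 = 0` since `Real.log 0 = 0`). -/
noncomputable def shannonEntropy {n : ℕ} (p : Fin n → ℝ) : ℝ :=
  -∑ i, p i * Real.log (p i)

/-- ℓ_α-norm of a vector (real power). -/
noncomputable def lNorm {n : ℕ} (α : ℝ) (p : Fin n → ℝ) : ℝ :=
  (∑ i, p i ^ α) ^ (1 / α)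

/-- `p` is an `n`-ary probability vector. -/
def IsProbVec {n : ℕ} (p : Fin n → ℝ) : Prop :=
  (∀ i, 0 ≤ p i) ∧ ∑ i, p i = 1

/-- The vector `v_n(q)`: first entry `1 - (n-1)q`, the other `n-1` entries equal `q`. -/
noncomputable def vVec (n : ℕ) (q : ℝ) : Fin n → ℝ :=
  fun i => if (i : ℕ) = 0 then 1 - ((n : ℝ) - 1) * q else q

/-- The vector `w_n(r)`: first `⌊1/r⌋` entries equal `r`, the next entry is
`1 - ⌊1/r⌋·r`, the remaining entries are `0`. -/
noncomputable def wVec (n : ℕ) (r : ℝ) : Fin n → ℝ :=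
  fun i => if (i : ℕ) < ⌊1 / r⌋₊ then r
           else if (i : ℕ) = ⌊1 / r⌋₊ then 1 - (⌊1 / r⌋₊ : ℝ) * r
           else 0

namespace S4
noncomputable def hE (p : ℝ) : ℝ := -((1-p) * Real.log (1-p) + p * Real.log p)
noncomputable def NE (α p : ℝ) : ℝ := ((1-p) ^ α + p ^ α) ^ (1/α)
noncomputable def hd (p : ℝ) : ℝ := Real.log (1-p) - Real.log p
noncomputable def Nd (α p : ℝ) : ℝ :=
  ((1-p) ^ α + p ^ α) ^ (1/α - 1) * (p ^ (α-1) - (1-p) ^ (α-1))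
noncomputable def gE (α p : ℝ) : ℝ := Nd α p / hd p

lemma shannon_eq (p : ℝ) : shannonEntropy (vVec 2 p) = hE p := by
  simp [shannonEntropy, vVec, Fin.sum_univ_two, hE]
  norm_num

lemma lnorm_eq (α p : ℝ) : lNorm α (vVec 2 p) = NE α p := by
  simp [lNorm, vVec, Fin.sum_univ_two, NE]
  norm_num

lemma hE_cont : Continuous hE := by
  have h1 : Continuous fun p : ℝ => (1-p) * Real.log (1-p) :=
    Real.continuous_mul_log.comp (continuous_const.sub continuous_id)
  have h2 : Continuous fun p : ℝ => p * Real.log p := Real.continuous_mul_log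
  exact (h1.add h2).neg

lemma hE_zero : hE 0 = 0 := by simp [hE]
lemma hE_half : hE (1/2) = Real.log 2 := by
  have : Real.log (1/2) = -Real.log 2 := by
    rw [one_div, Real.log_inv]
  norm_num [hE, this]
  ring

lemma hE_hasDeriv {p : ℝ} (hp : 0 < p) (hp1 : p < 1) : HasDerivAt hE (hd p) p := by
  have hq : (0:ℝ) < 1 - p := by linarith
  have d1 : HasDerivAt (fun x : ℝ => 1 - x) (-1) p := (hasDerivAt_id p).const_sub 1
  have d2 : HasDerivAt (fun x : ℝ => (1-x) * Real.log (1-x))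
      ((Real.log (1-p) + 1) * (-1)) p :=
    (Real.hasDerivAt_mul_log hq.ne').comp p d1
  have d3 : HasDerivAt (fun x : ℝ => x * Real.log x) (Real.log p + 1) p :=
    Real.hasDerivAt_mul_log hp.ne'
  have := ((d2.add d3).neg)
  refine this.congr_deriv ?_
  simp [hd]; ring

lemma hd_pos {p : ℝ} (hp : 0 < p) (hp2 : p < 1/2) : 0 < hd p := by
  have : Real.log p < Real.log (1-p) := Real.log_lt_log hp (by linarith)
  simp [hd]; linarith

lemma hd_hasDeriv {p : ℝ} (hp : 0 < p) (hp1 : p < 1) :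
    HasDerivAt hd (-(1/(p*(1-p)))) p := by
  have hq : (0:ℝ) < 1 - p := by linarith
  have d1 : HasDerivAt (fun x : ℝ => 1 - x) (-1) p := (hasDerivAt_id p).const_sub 1
  have d2 : HasDerivAt (fun x : ℝ => Real.log (1-x)) ((1-p)⁻¹ * (-1)) p :=
    (Real.hasDerivAt_log hq.ne').comp p d1
  have d3 : HasDerivAt Real.log p⁻¹ p := Real.hasDerivAt_log hp.ne'
  have := d2.sub d3
  refine this.congr_deriv ?_
  field_simp
  ring

lemma S_pos {α p : ℝ} (hα : 0 < α) (hp : 0 < p) (hp1 : p < 1) :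
    0 < (1-p) ^ α + p ^ α := by
  have hq : (0:ℝ) < 1 - p := by linarith
  positivity

lemma S_hasDeriv {α p : ℝ} (hp : 0 < p) (hp1 : p < 1) :
    HasDerivAt (fun x : ℝ => (1-x) ^ α + x ^ α)
      (α * (1-p) ^ (α-1) * (-1) + α * p ^ (α-1)) p := by
  have hq : (0:ℝ) < 1 - p := by linarith
  have d1 : HasDerivAt (fun x : ℝ => 1 - x) (-1) p := (hasDerivAt_id p).const_sub 1
  have d2 : HasDerivAt (fun x : ℝ => (1-x) ^ α) (α * (1-p) ^ (α-1) * (-1)) p :=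
    (Real.hasDerivAt_rpow_const (Or.inl hq.ne')).comp p d1
  have d3 : HasDerivAt (fun x : ℝ => x ^ α) (α * p ^ (α-1)) p :=
    Real.hasDerivAt_rpow_const (Or.inl hp.ne')
  exact d2.add d3

lemma NE_hasDeriv {α p : ℝ} (hα : 0 < α) (hp : 0 < p) (hp1 : p < 1) :
    HasDerivAt (NE α) (Nd α p) p := by
  have hS := S_pos hα hp hp1
  have dS := S_hasDeriv (α := α) hp hp1
  have dO : HasDerivAt (fun y : ℝ => y ^ (1/α))
      ((1/α) * ((1-p) ^ α + p ^ α) ^ (1/α - 1)) ((1-p) ^ α + p ^ α) :=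
    Real.hasDerivAt_rpow_const (Or.inl hS.ne')
  have := dO.comp p dS
  refine this.congr_deriv ?_
  unfold Nd
  field_simp
  ring

lemma Nd_hasDeriv {α p : ℝ} (hα : 0 < α) (hp : 0 < p) (hp1 : p < 1) :
    HasDerivAt (Nd α)
      ((α-1) * ((1-p) ^ α + p ^ α) ^ (1/α - 2) * (p ^ (α-2) * (1-p) ^ (α-2))) p := by
  have hq : (0:ℝ) < 1 - p := by linarith
  have hS := S_pos hα hp hp1
  have dS := S_hasDeriv (α := α) hp hp1
  have d1 : HasDerivAt (fun x : ℝ => 1 - x) (-1) p := (hasDerivAt_id p).const_sub 1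
  have dpow : HasDerivAt (fun x : ℝ => ((1-x) ^ α + x ^ α) ^ (1/α - 1))
      ((1/α - 1) * ((1-p) ^ α + p ^ α) ^ (1/α - 1 - 1) *
        (α * (1-p) ^ (α-1) * (-1) + α * p ^ (α-1))) p :=
    by have h := (Real.hasDerivAt_rpow_const (x := (1-p) ^ α + p ^ α) (p := 1/α - 1) (Or.inl hS.ne')).comp p dS; exact h
  have dd : HasDerivAt (fun x : ℝ => x ^ (α-1) - (1-x) ^ (α-1))
      ((α-1) * p ^ (α-1-1) - (α-1) * (1-p) ^ (α-1-1) * (-1)) p :=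
    (Real.hasDerivAt_rpow_const (Or.inl hp.ne')).sub
      (((Real.hasDerivAt_rpow_const (Or.inl hq.ne')).comp p d1))
  have dN := dpow.mul dd
  have bp : ∀ y : ℝ, p ^ (y+1) = p ^ y * p := fun y => by
    rw [Real.rpow_add hp, Real.rpow_one]
  have bq : ∀ y : ℝ, (1-p) ^ (y+1) = (1-p) ^ y * (1-p) := fun y => by
    rw [Real.rpow_add hq, Real.rpow_one]
  have e1 : p ^ (α-1) = p ^ (α-2) * p := by rw [← bp (α-2)]; congr 1; ring
  have e1' : (1-p) ^ (α-1) = (1-p) ^ (α-2) * (1-p) := by rw [← bq (α-2)]; congr 1; ring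
  have e2 : p ^ α = p ^ (α-2) * p * p := by
    rw [← e1, ← bp (α-1)]; congr 1; ring
  have e2' : (1-p) ^ α = (1-p) ^ (α-2) * (1-p) * (1-p) := by
    rw [← e1', ← bq (α-1)]; congr 1; ring
  have eS : ((1-p) ^ α + p ^ α) ^ (1/α - 1) =
      ((1-p) ^ α + p ^ α) ^ (1/α - 2) * ((1-p) ^ α + p ^ α) := by
    rw [show 1/α - 1 = (1/α - 2)+1 by ring, Real.rpow_add hS, Real.rpow_one]
  refine dN.congr_deriv ?_
  rw [show α-1-1 = α-2 by ring, show 1/α - 1 - 1 = 1/α - 2 by ring, eS, e1, e1', e2, e2']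
  field_simp
  ring

noncomputable def phiF (α p : ℝ) : ℝ :=
  (α-1) * (Real.log (1-p) - Real.log p) + p ^ α * (1-p) ^ (1-α)
    - (1-p) ^ α * p ^ (1-α) + (1 - 2*p)

noncomputable def phiD (α p : ℝ) : ℝ :=
  (α-1) * (-(1/(p*(1-p))))
    + (α * p ^ (α-1) * (1-p) ^ (1-α) - (1-α) * p ^ α * (1-p) ^ (-α))
    + (α * (1-p) ^ (α-1) * p ^ (1-α) - (1-α) * (1-p) ^ α * p ^ (-α)) - 2

lemma phiF_half (α : ℝ) : phiF α (1/2) = 0 := by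
  have e : (1:ℝ) - 1/2 = 1/2 := by norm_num
  unfold phiF
  rw [e]
  ring

lemma phiF_hasDeriv {α p : ℝ} (hp : 0 < p) (hp1 : p < 1) :
    HasDerivAt (phiF α) (phiD α p) p := by
  have hq : (0:ℝ) < 1 - p := by linarith
  have d1 : HasDerivAt (fun x : ℝ => 1 - x) (-1) p := (hasDerivAt_id p).const_sub 1
  have t1 : HasDerivAt (fun x : ℝ => (α-1) * (Real.log (1-x) - Real.log x))
      ((α-1) * (-(1/(p*(1-p))))) p := (hd_hasDeriv hp hp1).const_mul (α-1)
  have dpa : HasDerivAt (fun x : ℝ => x ^ α) (α * p ^ (α-1)) p :=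
    Real.hasDerivAt_rpow_const (Or.inl hp.ne')
  have dp1a : HasDerivAt (fun x : ℝ => x ^ (1-α)) ((1-α) * p ^ (1-α-1)) p :=
    Real.hasDerivAt_rpow_const (Or.inl hp.ne')
  have dqa : HasDerivAt (fun x : ℝ => (1-x) ^ α) (α * (1-p) ^ (α-1) * (-1)) p :=
    (Real.hasDerivAt_rpow_const (Or.inl hq.ne')).comp p d1
  have dq1a : HasDerivAt (fun x : ℝ => (1-x) ^ (1-α)) ((1-α) * (1-p) ^ (1-α-1) * (-1)) p :=
    (Real.hasDerivAt_rpow_const (Or.inl hq.ne')).comp p d1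
  have t2 := dpa.mul dq1a
  have t3 := dqa.mul dp1a
  have t4 : HasDerivAt (fun x : ℝ => 1 - 2*x) (-(2*1)) p :=
    ((hasDerivAt_id p).const_mul 2).const_sub 1
  have total := ((t1.add t2).sub t3).add t4
  refine total.congr_deriv ?_
  rw [show 1-α-1 = -α by ring]
  unfold phiD
  ring

lemma phiD_pos {α p : ℝ} (hα0 : 0 < α) (hα1 : α ≠ 1) (hp : 0 < p) (hp2 : p < 1/2) :
    0 < phiD α p := by
  have hq : (0:ℝ) < 1 - p := by linarith
  obtain ⟨L, hL⟩ : ∃ L : ℝ, L = Real.log (1-p) - Real.log p := ⟨_, rfl⟩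
  have hLpos : 0 < L := by
    have := Real.log_lt_log hp (by linarith : p < 1 - p)
    rw [hL]; linarith
  have E : ∀ a b : ℝ, p ^ a * (1-p) ^ b = Real.exp (a * Real.log p + b * Real.log (1-p)) := by
    intro a b
    rw [Real.rpow_def_of_pos hp, Real.rpow_def_of_pos hq, ← Real.exp_add]
    ring_nf
  have f1 : p ^ (α-1) * (1-p) ^ (1-α) = Real.exp ((1-α)*L) := by
    rw [E]; congr 1; rw [hL]; ring
  have f2 : (1-p) ^ (α-1) * p ^ (1-α) = Real.exp (-((1-α)*L)) := by
    rw [mul_comm, E]; congr 1; rw [hL]; ring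
  have f3 : p ^ α * (1-p) ^ (-α) = Real.exp (-(α*L)) := by
    rw [E]; congr 1; rw [hL]; ring
  have f4 : (1-p) ^ α * p ^ (-α) = Real.exp (α*L) := by
    rw [mul_comm, E]; congr 1; rw [hL]; ring
  have fp : p⁻¹ = 1 + Real.exp L := by
    have : Real.exp L = (1-p)/p := by
      rw [hL, Real.exp_sub, Real.exp_log hq, Real.exp_log hp]
    rw [this]; field_simp; ring
  have fq : (1-p)⁻¹ = 1 + Real.exp (-L) := by
    have : Real.exp (-L) = p/(1-p) := by
      rw [hL, neg_sub, Real.exp_sub, Real.exp_log hq, Real.exp_log hp]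
    rw [this]; field_simp; ring
  have key : phiD α p = 2*(1-α) * (Real.cosh L - Real.cosh (α*L))
      + 2*α * (Real.cosh ((1-α)*L) - 1) := by
    unfold phiD
    have h1 : α * p ^ (α-1) * (1-p) ^ (1-α) = α * Real.exp ((1-α)*L) := by
      rw [mul_assoc, f1]
    have h2 : α * (1-p) ^ (α-1) * p ^ (1-α) = α * Real.exp (-((1-α)*L)) := by
      rw [mul_assoc, f2]
    have h3 : (1-α) * p ^ α * (1-p) ^ (-α) = (1-α) * Real.exp (-(α*L)) := by
      rw [mul_assoc, f3]
    have h4 : (1-α) * (1-p) ^ α * p ^ (-α) = (1-α) * Real.exp (α*L) := by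
      rw [mul_assoc, f4]
    have h5 : 1/(p*(1-p)) = (1 + Real.exp L) * (1 + Real.exp (-L)) := by
      rw [← fp, ← fq]; field_simp
    have h6 : Real.exp L * Real.exp (-L) = 1 := by
      rw [← Real.exp_add]; simp
    rw [h1, h2, h3, h4, h5, Real.cosh_eq, Real.cosh_eq, Real.cosh_eq]
    linear_combination (1-α) * h6
  rw [key]
  rcases lt_or_gt_of_ne hα1 with hlt | hgt
  · have c1 : Real.cosh (α*L) < Real.cosh L := by
      rw [Real.cosh_lt_cosh, abs_of_pos hLpos, abs_of_pos (mul_pos hα0 hLpos)]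
      nlinarith
    have c2 : 1 < Real.cosh ((1-α)*L) :=
      Real.one_lt_cosh.mpr (ne_of_gt (mul_pos (by linarith) hLpos))
    nlinarith [mul_pos (show (0:ℝ) < 1-α by linarith) (show 0 < Real.cosh L - Real.cosh (α*L) by linarith),
      mul_pos hα0 (show 0 < Real.cosh ((1-α)*L) - 1 by linarith)]
  · have c1 : Real.cosh L < Real.cosh (α*L) := by
      rw [Real.cosh_lt_cosh, abs_of_pos hLpos, abs_of_pos (mul_pos hα0 hLpos)]
      nlinarith
    have c2 : 1 < Real.cosh ((1-α)*L) := by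
      apply Real.one_lt_cosh.mpr
      have : (1-α)*L < 0 := mul_neg_of_neg_of_pos (by linarith) hLpos
      exact ne_of_lt this
    nlinarith [mul_pos (show (0:ℝ) < α-1 by linarith) (show 0 < Real.cosh (α*L) - Real.cosh L by linarith),
      mul_pos hα0 (show 0 < Real.cosh ((1-α)*L) - 1 by linarith)]

lemma phiF_neg {α p : ℝ} (hα0 : 0 < α) (hα1 : α ≠ 1) (hp : 0 < p) (hp2 : p < 1/2) :
    phiF α p < 0 := by
  have mono : StrictMonoOn (phiF α) (Set.Ioc 0 (1/2)) := by
    apply strictMonoOn_of_deriv_pos (convex_Ioc _ _)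
    · intro x hx
      exact (phiF_hasDeriv hx.1 (by linarith [hx.2] : x < 1)).continuousAt.continuousWithinAt
    · intro x hx
      rw [interior_Ioc] at hx
      rw [(phiF_hasDeriv hx.1 (by linarith [hx.2] : x < 1)).deriv]
      exact phiD_pos hα0 hα1 hx.1 hx.2
  have := mono (Set.mem_Ioc.mpr ⟨hp, by linarith⟩) (Set.mem_Ioc.mpr ⟨by norm_num, le_refl _⟩) hp2
  rw [phiF_half] at this
  exact this

lemma num_eq {α p : ℝ} (hα : 0 < α) (hp : 0 < p) (hp1 : p < 1) :
    (α-1) * ((1-p) ^ α + p ^ α) ^ (1/α - 2) * (p ^ (α-2) * (1-p) ^ (α-2)) * hd p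
      + Nd α p * (1/(p*(1-p)))
      = ((1-p) ^ α + p ^ α) ^ (1/α - 2) * (p ^ (α-2) * (1-p) ^ (α-2)) * phiF α p := by
  have hq : (0:ℝ) < 1 - p := by linarith
  have hS := S_pos hα hp hp1
  have hA : (0:ℝ) < p ^ (α-2) := Real.rpow_pos_of_pos hp _
  have hB : (0:ℝ) < (1-p) ^ (α-2) := Real.rpow_pos_of_pos hq _
  have bp : ∀ y : ℝ, p ^ (y+1) = p ^ y * p := fun y => by
    rw [Real.rpow_add hp, Real.rpow_one]
  have bq : ∀ y : ℝ, (1-p) ^ (y+1) = (1-p) ^ y * (1-p) := fun y => by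
    rw [Real.rpow_add hq, Real.rpow_one]
  have e1 : p ^ (α-1) = p ^ (α-2) * p := by rw [← bp (α-2)]; congr 1; ring
  have e1' : (1-p) ^ (α-1) = (1-p) ^ (α-2) * (1-p) := by rw [← bq (α-2)]; congr 1; ring
  have e2 : p ^ α = p ^ (α-2) * p * p := by
    rw [← e1, ← bp (α-1)]; congr 1; ring
  have e2' : (1-p) ^ α = (1-p) ^ (α-2) * (1-p) * (1-p) := by
    rw [← e1', ← bq (α-1)]; congr 1; ring
  have eS : ((1-p) ^ α + p ^ α) ^ (1/α - 1) =
      ((1-p) ^ α + p ^ α) ^ (1/α - 2) * ((1-p) ^ α + p ^ α) := by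
    rw [show 1/α - 1 = (1/α - 2)+1 by ring, Real.rpow_add hS, Real.rpow_one]
  have ePm : p ^ (1-α) * p ^ (α-2) = p⁻¹ := by
    rw [← Real.rpow_add hp, show (1-α)+(α-2) = (-1:ℝ) by ring, Real.rpow_neg_one]
  have eP : p ^ (1-α) = p⁻¹ / p ^ (α-2) := by
    rw [eq_div_iff hA.ne']; exact ePm
  have eQm : (1-p) ^ (1-α) * (1-p) ^ (α-2) = (1-p)⁻¹ := by
    rw [← Real.rpow_add hq, show (1-α)+(α-2) = (-1:ℝ) by ring, Real.rpow_neg_one]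
  have eQ : (1-p) ^ (1-α) = (1-p)⁻¹ / (1-p) ^ (α-2) := by
    rw [eq_div_iff hB.ne']; exact eQm
  unfold Nd phiF hd
  rw [eS, e1, e1', e2, e2', eP, eQ]
  field_simp
  ring

lemma gE_deriv_neg {α p : ℝ} (hα0 : 0 < α) (hα1 : α ≠ 1) (hp : 0 < p) (hp2 : p < 1/2) :
    HasDerivAt (gE α)
      (((α-1) * ((1-p) ^ α + p ^ α) ^ (1/α - 2) * (p ^ (α-2) * (1-p) ^ (α-2)) * hd p
        - Nd α p * (-(1/(p*(1-p))))) / hd p ^ 2) p ∧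
      ((α-1) * ((1-p) ^ α + p ^ α) ^ (1/α - 2) * (p ^ (α-2) * (1-p) ^ (α-2)) * hd p
        - Nd α p * (-(1/(p*(1-p))))) / hd p ^ 2 < 0 := by
  have hp1 : p < 1 := by linarith
  have hq : (0:ℝ) < 1 - p := by linarith
  have hdpos := hd_pos hp hp2
  constructor
  · exact (Nd_hasDeriv hα0 hp hp1).div (hd_hasDeriv hp hp1) hdpos.ne'
  · apply div_neg_of_neg_of_pos
    · have : (α-1) * ((1-p) ^ α + p ^ α) ^ (1/α - 2) * (p ^ (α-2) * (1-p) ^ (α-2)) * hd p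
          - Nd α p * (-(1/(p*(1-p))))
          = ((1-p) ^ α + p ^ α) ^ (1/α - 2) * (p ^ (α-2) * (1-p) ^ (α-2)) * phiF α p := by
        rw [← num_eq hα0 hp hp1]; ring
      rw [this]
      exact mul_neg_of_pos_of_neg
        (mul_pos (Real.rpow_pos_of_pos (S_pos hα0 hp hp1) _)
          (mul_pos (Real.rpow_pos_of_pos hp _) (Real.rpow_pos_of_pos hq _)))
        (phiF_neg hα0 hα1 hp hp2)
    · positivity

lemma gE_strictAnti {α : ℝ} (hα0 : 0 < α) (hα1 : α ≠ 1) :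
    StrictAntiOn (gE α) (Set.Ioo 0 (1/2)) := by
  apply strictAntiOn_of_deriv_neg (convex_Ioo _ _)
  · intro x hx
    exact ((gE_deriv_neg hα0 hα1 hx.1 hx.2).1).continuousAt.continuousWithinAt
  · intro x hx
    rw [interior_Ioo] at hx
    rw [(gE_deriv_neg hα0 hα1 hx.1 hx.2).1.deriv]
    exact (gE_deriv_neg hα0 hα1 hx.1 hx.2).2

lemma NE_contOn {α : ℝ} (hα0 : 0 < α) : ContinuousOn (NE α) (Set.Icc 0 (1/2)) := by
  intro p hp
  have hq : (0:ℝ) < 1 - p := by have := hp.2; norm_num at this ⊢; linarith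
  have c1 : ContinuousAt (fun x : ℝ => x ^ α) p :=
    Real.continuousAt_rpow_const p α (Or.inr hα0.le)
  have c2 : ContinuousAt (fun x : ℝ => (1-x) ^ α) p := by
    have : ContinuousAt (fun y : ℝ => y ^ α) (1-p) :=
      Real.continuousAt_rpow_const _ α (Or.inr hα0.le)
    exact this.comp ((continuous_const.sub continuous_id).continuousAt)
  have cS := c2.add c1
  have hSpos : (0:ℝ) < (1-p) ^ α + p ^ α := by
    have h1 : (0:ℝ) < (1-p) ^ α := Real.rpow_pos_of_pos hq _
    have h2 : (0:ℝ) ≤ p ^ α := Real.rpow_nonneg hp.1 _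
    linarith
  exact (cS.rpow_const (Or.inl hSpos.ne')).continuousWithinAt

lemma hE_mono : StrictMonoOn hE (Set.Icc 0 (1/2)) := by
  apply strictMonoOn_of_deriv_pos (convex_Icc _ _) hE_cont.continuousOn
  intro x hx
  rw [interior_Icc] at hx
  rw [(hE_hasDeriv hx.1 (by linarith [hx.2] : x < 1)).deriv]
  exact hd_pos hx.1 hx.2

lemma hE_surj {x : ℝ} (hx : x ∈ Set.Icc 0 (Real.log 2)) :
    ∃ p ∈ Set.Icc (0:ℝ) (1/2), hE p = x := by
  have h := intermediate_value_Icc (by norm_num : (0:ℝ) ≤ 1/2) hE_cont.continuousOn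
  rw [hE_zero, hE_half] at h
  obtain ⟨p, hp, hpx⟩ := h hx
  exact ⟨p, hp, hpx⟩

lemma slope_eq {α a b : ℝ} (hα0 : 0 < α) (ha : 0 ≤ a) (hab : a < b) (hb : b ≤ 1/2) :
    ∃ c ∈ Set.Ioo a b, NE α b - NE α a = (hE b - hE a) * gE α c := by
  obtain ⟨c, hc, heq⟩ := exists_ratio_hasDerivAt_eq_ratio_slope hE hd hab
    (hE_cont.continuousOn)
    (fun x hx => hE_hasDeriv (lt_of_le_of_lt ha hx.1) (by linarith [hx.2, hb] : x < 1))
    (NE α) (Nd α)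
    ((NE_contOn hα0).mono (Set.Icc_subset_Icc ha hb))
    (fun x hx => NE_hasDeriv hα0 (lt_of_le_of_lt ha hx.1) (by linarith [hx.2, hb] : x < 1))
  have hc0 : 0 < c := lt_of_le_of_lt ha hc.1
  have hc2 : c < 1/2 := lt_of_lt_of_le hc.2 hb
  have hdne := (hd_pos hc0 hc2).ne'
  refine ⟨c, hc, ?_⟩
  unfold gE
  field_simp
  linarith [heq]

lemma key_lemma {α p r p' a b : ℝ} (hα0 : 0 < α) (hα1 : α ≠ 1)
    (h0 : 0 ≤ p) (h1 : p < r) (h2 : r < p') (h3 : p' ≤ 1/2)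
    (ha : 0 < a) (hb : 0 < b) (hab : a + b = 1)
    (hr : hE r = a * hE p + b * hE p') :
    a * NE α p + b * NE α p' < NE α r := by
  obtain ⟨c1, hc1, e1⟩ := slope_eq hα0 h0 h1 (by linarith)
  obtain ⟨c2, hc2, e2⟩ := slope_eq hα0 (by linarith : (0:ℝ) ≤ r) h2 h3
  have hc1m : c1 ∈ Set.Ioo (0:ℝ) (1/2) := ⟨lt_of_le_of_lt h0 hc1.1, by linarith [hc1.2]⟩
  have hc2m : c2 ∈ Set.Ioo (0:ℝ) (1/2) := ⟨by linarith [hc2.1], lt_of_lt_of_le hc2.2 h3⟩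
  have hg : gE α c2 < gE α c1 :=
    gE_strictAnti hα0 hα1 hc1m hc2m (lt_trans hc1.2 hc2.1)
  have hEp_r : hE p < hE r :=
    hE_mono ⟨h0, by linarith⟩ ⟨by linarith, by linarith⟩ h1
  have hEr_p' : hE r < hE p' :=
    hE_mono ⟨by linarith, by linarith⟩ ⟨by linarith, h3⟩ h2
  have hcomb : a * (hE r - hE p) = b * (hE p' - hE r) := by
    have h' : a * hE r + b * hE r = a * hE p + b * hE p' := by
      rw [← add_mul, hab, one_mul]; exact hr
    linarith
  have hC : 0 < a * (hE r - hE p) := mul_pos ha (by linarith)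
  have final : NE α r - (a * NE α p + b * NE α p')
      = a * (hE r - hE p) * (gE α c1 - gE α c2) := by
    have g1 : a * (NE α r - NE α p) = a * (hE r - hE p) * gE α c1 := by rw [e1]; ring
    have g2 : b * (NE α p' - NE α r) = b * (hE p' - hE r) * gE α c2 := by rw [e2]; ring
    linear_combination g1 - g2 + gE α c2 * hcomb - NE α r * hab
  nlinarith [mul_pos hC (sub_pos.mpr hg), final]

lemma main_aux {α : ℝ} (hα0 : 0 < α) (hα1 : α ≠ 1) (F : ℝ → ℝ)
    (hF : ∀ p ∈ Set.Icc (0 : ℝ) (1 / 2),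
      F (shannonEntropy (vVec 2 p)) = lNorm α (vVec 2 p))
    {x y a b : ℝ} (hx : x ∈ Set.Icc 0 (Real.log 2)) (hy : y ∈ Set.Icc 0 (Real.log 2))
    (hxy : x < y) (ha : 0 < a) (hb : 0 < b) (hab : a + b = 1) :
    a * F x + b * F y < F (a * x + b * y) := by
  have hF' : ∀ p ∈ Set.Icc (0:ℝ) (1/2), F (hE p) = NE α p := by
    intro p hp
    have := hF p hp
    rwa [shannon_eq, lnorm_eq] at this
  obtain ⟨p, hp, hpx⟩ := hE_surj hx
  obtain ⟨p', hp', hpy⟩ := hE_surj hy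
  have hpp' : p < p' := by
    rcases lt_trichotomy p p' with h | h | h
    · exact h
    · exfalso; rw [h, hpy] at hpx; linarith
    · exfalso; have := hE_mono hp' hp h; rw [hpx, hpy] at this; linarith
  have hz1 : x < a * x + b * y := by
    have e : a * x + b * y - x = b * (y - x) := by linear_combination x * hab
    nlinarith [mul_pos hb (sub_pos.mpr hxy)]
  have hz2 : a * x + b * y < y := by
    have e : y - (a * x + b * y) = a * (y - x) := by linear_combination (-y) * hab
    nlinarith [mul_pos ha (sub_pos.mpr hxy)]
  have hzm : a * x + b * y ∈ Set.Icc 0 (Real.log 2) :=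
    ⟨by linarith [hx.1], by linarith [hy.2]⟩
  obtain ⟨r, hrm, hrz⟩ := hE_surj hzm
  have hpr : p < r := by
    rcases lt_trichotomy p r with h | h | h
    · exact h
    · exfalso; rw [h, hrz] at hpx; linarith
    · exfalso; have := hE_mono hrm hp h; rw [hpx, hrz] at this; linarith
  have hrp' : r < p' := by
    rcases lt_trichotomy r p' with h | h | h
    · exact h
    · exfalso; rw [← h, hrz] at hpy; linarith
    · exfalso; have := hE_mono hp' hrm h; rw [hpy, hrz] at this; linarith
  have hFx : F x = NE α p := by rw [← hpx]; exact hF' p hp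
  have hFy : F y = NE α p' := by rw [← hpy]; exact hF' p' hp'
  have hFz : F (a * x + b * y) = NE α r := by rw [← hrz]; exact hF' r hrm
  rw [hFx, hFy, hFz]
  exact key_lemma hα0 hα1 hp.1 hpr hrp' hp'.2 ha hb hab
    (by rw [hrz, hpx, hpy])
end S4

theorem stmt4 (α : ℝ) (hα : α ∈ Set.Ioo (0 : ℝ) 1 ∪ Set.Ioi 1)
    (F : ℝ → ℝ)
    (hF : ∀ p ∈ Set.Icc (0 : ℝ) (1 / 2),
      F (shannonEntropy (vVec 2 p)) = lNorm α (vVec 2 p)) :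
    StrictConcaveOn ℝ (Set.Icc 0 (Real.log 2)) F := by
  have hα0 : 0 < α := by
    rcases hα with h | h
    · exact h.1
    · exact lt_trans one_pos h
  have hα1 : α ≠ 1 := by
    rcases hα with h | h
    · exact ne_of_lt h.2
    · exact ne_of_gt h
  constructor
  · exact convex_Icc _ _
  · intro x hx y hy hxy a b ha hb hab
    simp only [smul_eq_mul]
    rcases hxy.lt_or_gt with h | h
    · exact S4.main_aux hα0 hα1 F hF hx hy h ha hb hab
    · have := S4.main_aux hα0 hα1 F hF hy hx h hb ha (by linarith)
      calc a * F x + b * F y = b * F y + a * F x := by ring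
        _ < F (b * y + a * x) := this
        _ = F (a * x + b * y) := by rw [add_comm]
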